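/- Let φ : [t₀, ∞) → ℝ be a continuous function, t₀ > 0, such that tan φ(t) = tan(χ(t) + ε(t)) for all t, where χ(t) = t − (ν/2 + 1/4)π and ε(t) = O(t^{−1}) as t → ∞. Then there exists a unique integer k such that φ(t) = χ(t) + kπ + O(t^{−1}) as t → ∞. -/

import Mathlib

open Real Filter Set

private lemma round_eq_of_abs_sub_lt_half {x : ℝ} {m : ℤ} (h : |x - m| < 1 / 2) :
    round x = m := by
  have h0 : round (x - m) = 0 := by
    rw [round_eq_zero_iff]
    constructor
    · linarith [abs_lt.mp h |>.1]
    · linarith [abs_lt.mp h |>.2]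
  have := round_sub_intCast x m
  omega

/-- If φ is continuous on [t₀,∞) and tan φ(t) = tan(χ(t) + ε(t)),
i.e. φ(t) and χ(t) + ε(t) differ by an integer multiple of π, where
χ(t) = t − (ν/2 + 1/4)π and ε(t) = O(t⁻¹), then there is a unique integer k
with φ(t) = χ(t) + kπ + O(t⁻¹) as t → ∞. -/
theorem phase_from_tan (t₀ ν : ℝ) (ht₀ : 0 < t₀) (φ ε : ℝ → ℝ)
    (hφ : ContinuousOn φ (Set.Ici t₀))
    (hε : ∃ C : ℝ, ∀ t ≥ t₀, |ε t| ≤ C / t)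
    (htan : ∀ t ≥ t₀, ∃ m : ℤ,
      φ t = (t - (ν / 2 + 1 / 4) * π) + ε t + m * π) :
    ∃! k : ℤ, ∃ C > 0, ∀ᶠ t in atTop,
      |φ t - ((t - (ν / 2 + 1 / 4) * π) + k * π)| ≤ C / t := by
  obtain ⟨C₀, hC₀⟩ := hε
  set C : ℝ := max C₀ 1 with hCdef
  have hC1 : (1:ℝ) ≤ C := le_max_right _ _
  have hCpos : (0:ℝ) < C := lt_of_lt_of_le one_pos hC1
  have hCε : ∀ t ≥ t₀, |ε t| ≤ C / t := by
    intro t ht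
    have htpos : 0 < t := lt_of_lt_of_le ht₀ ht
    exact (hC₀ t ht).trans (by gcongr; exact le_max_left _ _)
  set T : ℝ := max t₀ (4 * C / π) with hTdef
  have hTt0 : t₀ ≤ T := le_max_left _ _
  have hTpos : 0 < T := lt_of_lt_of_le ht₀ hTt0
  have hsmall : ∀ t ≥ T, |ε t| ≤ π / 4 := by
    intro t ht
    have h1 : t₀ ≤ t := le_trans hTt0 ht
    have htpos : 0 < t := lt_of_lt_of_le hTpos ht
    refine (hCε t h1).trans ?_
    rw [div_le_div_iff₀ htpos (by norm_num : (0:ℝ) < 4)]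
    have h4 : 4 * C / π ≤ t := le_trans (le_max_right _ _) ht
    calc C * 4 = (4 * C / π) * π := by field_simp
    _ ≤ t * π := mul_le_mul_of_nonneg_right h4 pi_pos.le
    _ = π * t := mul_comm _ _
  set g : ℝ → ℝ := fun t => φ t - (t - (ν / 2 + 1 / 4) * π) with hgdef
  have hg : ContinuousOn g (Set.Ici t₀) := by
    apply hφ.sub
    fun_prop
  set F : ℝ → ℤ := fun t => round (g t / π) with hFdef
  -- for t ≥ T, F t recovers the integer m
  have hkey : ∀ t ≥ T, g t = ε t + F t * π := by
    intro t ht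
    have h1 : t₀ ≤ t := le_trans hTt0 ht
    obtain ⟨m, hm⟩ := htan t h1
    have hgt : g t = ε t + m * π := by
      show φ t - (t - (ν / 2 + 1 / 4) * π) = ε t + m * π
      rw [hm]; ring
    have hFt : F t = m := by
      apply round_eq_of_abs_sub_lt_half
      have : g t / π - m = ε t / π := by
        rw [hgt]; field_simp; ring
      rw [this, abs_div, abs_of_pos pi_pos]
      rw [div_lt_iff₀ pi_pos]
      have := hsmall t ht
      nlinarith [pi_pos]
    rw [hFt]; exact hgt
  -- F is continuous on Ici T
  have hFcont : ContinuousOn F (Ici T) := by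
    intro t ht
    have hgc : ContinuousWithinAt g (Ici T) t :=
      (hg.mono (Ici_subset_Ici.mpr hTt0)) t ht
    have hev : ∀ᶠ s in nhdsWithin t (Ici T), F s = F t := by
      have h1 : ∀ᶠ s in nhdsWithin t (Ici T), |g s - g t| < π / 4 := by
        have : Tendsto (fun s => |g s - g t|) (nhdsWithin t (Ici T)) (nhds 0) := by
          have h' : ContinuousWithinAt (fun s => |g s - g t|) (Ici T) t :=
            (hgc.sub continuousWithinAt_const).abs
          have h'' : Tendsto (fun s => |g s - g t|) (nhdsWithin t (Ici T))
              (nhds (|g t - g t|)) := h'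
          simpa using h''
        exact this.eventually_lt_const (by positivity)
      have h2 : ∀ᶠ s in nhdsWithin t (Ici T), s ∈ Ici T :=
        eventually_mem_nhdsWithin
      filter_upwards [h1, h2] with s hs hsT
      have hgt := hkey t ht
      have hgs := hkey s hsT
      -- |g s / π - F t| < 1/2
      have hFs : F s = F t := by
        have hεt := hsmall t ht
        have e1 : |g s - F t * π| < π / 2 := by
          have h3 : g s - F t * π = (g s - g t) + ε t := by rw [hgt]; ring
          rw [h3]
          calc |(g s - g t) + ε t| ≤ |g s - g t| + |ε t| := abs_add_le _ _
          _ < π / 4 + π / 4 := add_lt_add_of_lt_of_le hs hεt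
          _ = π / 2 := by ring
        apply round_eq_of_abs_sub_lt_half
        have heq : g s / π - F t = (g s - F t * π) / π := by field_simp
        rw [heq, abs_div, abs_of_pos pi_pos, div_lt_iff₀ pi_pos]
        linarith [e1]
      exact hFs
    have : Tendsto F (nhdsWithin t (Ici T)) (nhds (F t)) :=
      Tendsto.congr' (hev.mono fun s hs => hs.symm) tendsto_const_nhds
    exact this
  -- F constant on Ici T
  set k : ℤ := F T with hkdef
  have hFconst : ∀ t ≥ T, F t = k :=
    fun t ht => (isPreconnected_Ici).constant hFcont ht (self_mem_Ici)
  refine ⟨k, ⟨C, hCpos, ?_⟩, ?_⟩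
  · filter_upwards [eventually_ge_atTop T] with t ht
    have h1 : t₀ ≤ t := le_trans hTt0 ht
    have hgt := hkey t ht
    rw [hFconst t ht] at hgt
    have hgt' : φ t - (t - (ν / 2 + 1 / 4) * π) = ε t + k * π := hgt
    have : φ t - ((t - (ν / 2 + 1 / 4) * π) + k * π) = ε t := by linarith
    rw [this]
    exact hCε t h1
  · rintro k' ⟨C', hC'pos, hev'⟩
    by_contra hne
    have hevk : ∀ᶠ t in atTop, |φ t - ((t - (ν / 2 + 1 / 4) * π) + k * π)| ≤ C / t := by
      filter_upwards [eventually_ge_atTop T] with t ht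
      have h1 : t₀ ≤ t := le_trans hTt0 ht
      have hgt := hkey t ht
      rw [hFconst t ht] at hgt
      have hgt' : φ t - (t - (ν / 2 + 1 / 4) * π) = ε t + k * π := hgt
      have heq : φ t - ((t - (ν / 2 + 1 / 4) * π) + k * π) = ε t := by linarith
      rw [heq]; exact hCε t h1
    have hbound : ∀ᶠ t in atTop, |(k' : ℝ) * π - k * π| ≤ (C + C') / t := by
      filter_upwards [hevk, hev'] with t h1 h2
      have : (k' : ℝ) * π - k * π =
          (φ t - ((t - (ν / 2 + 1 / 4) * π) + k * π))
          - (φ t - ((t - (ν / 2 + 1 / 4) * π) + k' * π)) := by ring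
      rw [this]
      calc |_ - _| ≤ |φ t - ((t - (ν / 2 + 1 / 4) * π) + k * π)| +
            |φ t - ((t - (ν / 2 + 1 / 4) * π) + k' * π)| := abs_sub _ _
      _ ≤ C / t + C' / t := add_le_add h1 h2
      _ = (C + C') / t := by ring
    have htend : Tendsto (fun t : ℝ => (C + C') / t) atTop (nhds 0) :=
      tendsto_const_nhds.div_atTop tendsto_id
    have hle : |(k' : ℝ) * π - k * π| ≤ 0 := ge_of_tendsto htend hbound
    have : (k' : ℝ) * π = k * π := by
      have := abs_nonpos_iff.mp hle
      linarith [sub_eq_zero.mp this]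
    have : (k' : ℝ) = k := by
      field_simp [pi_ne_zero] at this
      exact_mod_cast this
    exact hne (by exact_mod_cast this)
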